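/- Let B = {a, b, x, y} be the four-element band with multiplication: aa = a, ab = y, ax = x, ay = y; ba = y, bb = b, bx = x, by = y; xa = x, xb = y, xx = x, xy = y; ya = y, yb = y, yx = x, yy = y. Then B is a semigroup (in which every element is idempotent), and in IG(B) the element ā·b̄ is not R*-related to any idempotent of IG(B); in particular IG(B) is not an abundant semigroup. -/

import Mathlib

/-! Common definitions: free idempotent generated semigroups over bands,
generalised Green's relations, and abundancy notions. -/

/-- `(e, f)` is a *basic pair* if `ef ∈ {e,f}` or `fe ∈ {e,f}`. -/
def basicPair {B : Type*} [Mul B] (e f : B) : Prop :=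
  e * f = e ∨ e * f = f ∨ f * e = e ∨ f * e = f

/-- The defining congruence of the free idempotent generated semigroup `IG B`:
the congruence on the free semigroup on `{ē : e ∈ B}` generated by the relations
`ē f̄ = (ef)‾` for basic pairs `(e, f)`. -/
def igCon (B : Type*) [Semigroup B] : Con (FreeSemigroup B) :=
  conGen fun w₁ w₂ => ∃ e f : B, basicPair e f ∧
    w₁ = FreeSemigroup.of e * FreeSemigroup.of f ∧ w₂ = FreeSemigroup.of (e * f)

/-- The free idempotent generated semigroup over a band `B`. -/
abbrev IG (B : Type*) [Semigroup B] := (igCon B).Quotient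

/-- The canonical generator `ē` of `IG B`. -/
def igOf {B : Type*} [Semigroup B] (e : B) : IG B :=
  ((FreeSemigroup.of e : FreeSemigroup B) : (igCon B).Quotient)

/-- `prodSeq x a b = x a * x (a+1) * ⋯ * x b` (it is `x a` when `b ≤ a`). -/
def prodSeq {M : Type*} [Mul M] (x : ℕ → M) (a b : ℕ) : M :=
  (List.range (b - a)).foldl (fun acc i => acc * x (a + i + 1)) (x a)

/-- The word `x̄_a x̄_{a+1} ⋯ x̄_b` in the free semigroup on `{ē : e ∈ B}`. -/
def freeWord {B : Type*} (x : ℕ → B) (a b : ℕ) : FreeSemigroup B :=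
  prodSeq (fun i => FreeSemigroup.of (x i)) a b

/-- The element `x̄_a x̄_{a+1} ⋯ x̄_b` of `IG B`. -/
def igWord {B : Type*} [Semigroup B] (x : ℕ → B) (a b : ℕ) : IG B :=
  ((freeWord x a b : FreeSemigroup B) : (igCon B).Quotient)

/-- Green's relation `𝓡`: `a 𝓡 b` iff `a = b` or `as = b`, `bt = a` for some `s, t`. -/
def GreenR {S : Type*} [Semigroup S] (a b : S) : Prop :=
  a = b ∨ ∃ s t : S, a * s = b ∧ b * t = a

/-- Green's relation `𝓛`: `a 𝓛 b` iff `a = b` or `sa = b`, `tb = a` for some `s, t`. -/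
def GreenL {S : Type*} [Semigroup S] (a b : S) : Prop :=
  a = b ∨ ∃ s t : S, s * a = b ∧ t * b = a

/-- `a 𝓡* b` iff for all `x, y ∈ S¹`, `xa = ya ↔ xb = yb`. -/
def RStar {S : Type*} [Semigroup S] (a b : S) : Prop :=
  ∀ x y : WithOne S,
    x * (a : WithOne S) = y * (a : WithOne S) ↔ x * (b : WithOne S) = y * (b : WithOne S)

/-- `a 𝓛* b` iff for all `x, y ∈ S¹`, `ax = ay ↔ bx = by`. -/
def LStar {S : Type*} [Semigroup S] (a b : S) : Prop :=
  ∀ x y : WithOne S,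
    (a : WithOne S) * x = (a : WithOne S) * y ↔ (b : WithOne S) * x = (b : WithOne S) * y

/-- `a 𝓡̃ b` iff for every idempotent `e`, `ea = a ↔ eb = b`. -/
def RTilde {S : Type*} [Semigroup S] (a b : S) : Prop :=
  ∀ e : S, IsIdempotentElem e → (e * a = a ↔ e * b = b)

/-- `a 𝓛̃ b` iff for every idempotent `e`, `ae = a ↔ be = b`. -/
def LTilde {S : Type*} [Semigroup S] (a b : S) : Prop :=
  ∀ e : S, IsIdempotentElem e → (a * e = a ↔ b * e = b)

/-- A semigroup is *abundant* if every `𝓡*`-class and every `𝓛*`-class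
contains an idempotent. -/
def Abundant (S : Type*) [Semigroup S] : Prop :=
  ∀ a : S, (∃ e : S, IsIdempotentElem e ∧ RStar a e) ∧
    (∃ e : S, IsIdempotentElem e ∧ LStar a e)

/-- A semigroup is *weakly abundant* if every `𝓡̃`-class and every `𝓛̃`-class
contains an idempotent. -/
def WeaklyAbundant (S : Type*) [Semigroup S] : Prop :=
  ∀ a : S, (∃ e : S, IsIdempotentElem e ∧ RTilde a e) ∧
    (∃ e : S, IsIdempotentElem e ∧ LTilde a e)

/-- On a band, `x` and `y` are `𝒟`-equivalent iff `xyx = x` and `yxy = y`. -/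
def dEquiv {B : Type*} [Mul B] (x y : B) : Prop :=
  x * y * x = x ∧ y * x * y = y

/-- On a band, `x` and `y` are `𝒥`-incomparable iff `xyx ≠ x` and `yxy ≠ y`. -/
def jIncomp {B : Type*} [Mul B] (x y : B) : Prop :=
  x * y * x ≠ x ∧ y * x * y ≠ y

/-- One step of the reduction system induced by the presentation of `IG B`:
replace a factor `ē f̄`, with `(e,f)` a basic pair, by `(ef)‾`. -/
def RedStep {B : Type*} [Semigroup B] (w w' : FreeSemigroup B) : Prop :=
  ∃ (p q : List B) (e f : B), basicPair e f ∧
    w.head :: w.tail = p ++ e :: f :: q ∧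
    w'.head :: w'.tail = p ++ (e * f) :: q

/-- A word is in *normal form* (irreducible) if no reduction step applies. -/
def IsNF {B : Type*} [Semigroup B] (w : FreeSemigroup B) : Prop :=
  ∀ w', ¬ RedStep w w'

/-- `x̄₁ ⋯ x̄ₙ` (letters `x 1, …, x n`) is in *almost normal form* witnessed by
block boundaries `idx 0 = 0 < idx 1 < ⋯ < idx r = n`: within each block all
letters are `𝒟`-equivalent, and letters in adjacent blocks are incomparable. -/
def AlmostNF {B : Type*} [Mul B] (x : ℕ → B) (n r : ℕ) (idx : ℕ → ℕ) : Prop :=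
  1 ≤ r ∧ idx 0 = 0 ∧ idx r = n ∧
  (∀ k < r, idx k < idx (k + 1)) ∧
  (∀ k < r, ∀ p q : ℕ, idx k < p → p ≤ idx (k + 1) → idx k < q → q ≤ idx (k + 1) →
    dEquiv (x p) (x q)) ∧
  (∀ k : ℕ, k + 1 < r → ∀ p q : ℕ, idx k < p → p ≤ idx (k + 1) →
    idx (k + 1) < q → q ≤ idx (k + 2) → jIncomp (x p) (x q))

/-- Condition (P) for `IG B`. -/
def CondP (B : Type*) [Semigroup B] : Prop :=
  ∀ (n m r : ℕ) (u v : ℕ → B) (iu iv : ℕ → ℕ),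
    AlmostNF u n r iu → AlmostNF v m r iv →
    igWord u 1 n = igWord v 1 m →
    ((∀ s : ℕ, 1 ≤ s → s ≤ r →
        (u (iu s) * v (iv s) = u (iu s) ∧ v (iv s) * u (iu s) = v (iv s)) →
        igWord u 1 (iu s) = igWord v 1 (iv s)) ∧
      (∀ t : ℕ, t + 1 ≤ r →
        (u (iu t + 1) * v (iv t + 1) = v (iv t + 1) ∧
          v (iv t + 1) * u (iu t + 1) = u (iu t + 1)) →
        igWord u (iu t + 1) n = igWord v (iv t + 1) m))

/-- A normal band is *pliant* if for every `𝒟`-class `D` there is `c ∈ D` with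
`u e u = c` for every `e ∈ D` and every `u` strictly `𝒥`-above `D`. -/
def Pliant (B : Type*) [Mul B] : Prop :=
  ∀ d : B, ∃ c : B, dEquiv c d ∧
    ∀ e u : B, dEquiv e d → (e * u * e = e ∧ u * e * u ≠ u) → u * e * u = c

/-- The four-element band `B = {a, b, x, y}` of Section 5 of the paper. -/
inductive B4 : Type
  | a | b | x | y
  deriving DecidableEq

instance : Fintype B4 :=
  ⟨⟨↑[B4.a, B4.b, B4.x, B4.y], by decide⟩, fun p => by cases p <;> decide⟩

open B4 in
/-- The multiplication table of `B4`. -/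
def B4.mul : B4 → B4 → B4
  | a, a => a | a, b => y | a, x => x | a, y => y
  | b, a => y | b, b => b | b, x => x | b, y => y
  | x, a => x | x, b => y | x, x => x | x, y => y
  | y, a => y | y, b => y | y, x => x | y, y => y

instance : Mul B4 := ⟨B4.mul⟩

instance : Semigroup B4 where
  mul_assoc := by decide

namespace IGB4

inductive S : Type
  | W : Bool → ℕ → S
  | X : S
  | Y : S
  deriving DecidableEq

namespace S

def mul : S → S → S
  | _, X => X
  | _, Y => Y
  | W f n, W g m => if (xor f (n % 2 == 1)) = g then W f (n + m) else W f (n + m + 1)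
  | X, W g m => if g = false ∧ m = 0 then X else Y
  | Y, W _ _ => Y

instance : Mul S := ⟨S.mul⟩

@[simp] lemma W_mul_W (f : Bool) (n : ℕ) (g : Bool) (m : ℕ) :
    W f n * W g m = if (xor f (n % 2 == 1)) = g then W f (n + m) else W f (n + m + 1) := rfl
@[simp] lemma mul_X (s : S) : s * X = X := by cases s <;> rfl
@[simp] lemma mul_Y (s : S) : s * Y = Y := by cases s <;> rfl
@[simp] lemma X_mul_W (g : Bool) (m : ℕ) :
    X * W g m = if g = false ∧ m = 0 then X else Y := rfl
@[simp] lemma Y_mul_W (g : Bool) (m : ℕ) : Y * W g m = Y := rfl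

lemma parity1 (n : ℕ) : ((n + 1) % 2 == 1) = !(n % 2 == 1) := by
  rcases Nat.mod_two_eq_zero_or_one n with h | h <;>
    · have : (n + 1) % 2 = 1 - n % 2 := by omega
      simp [this, h]

lemma parity2 (n m : ℕ) : ((n + m) % 2 == 1) = xor (n % 2 == 1) (m % 2 == 1) := by
  rcases Nat.mod_two_eq_zero_or_one n with h | h <;>
    rcases Nat.mod_two_eq_zero_or_one m with h' | h' <;>
    · have : (n + m) % 2 = (n % 2 + m % 2) % 2 := by omega
      simp [this, h, h']

instance : Semigroup S where
  mul_assoc := by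
    intro s t u
    cases u with
    | X => simp
    | Y => simp
    | W h k =>
      cases t with
      | X =>
        by_cases hc : h = false ∧ k = 0 <;> simp [hc]
      | Y => simp [apply_ite]
      | W g m =>
        cases s with
        | Y => simp [apply_ite]
        | X =>
          by_cases h1 : g = false ∧ m = 0
          · obtain ⟨rfl, rfl⟩ := h1
            cases h <;> simp [apply_ite]
          · have h2 : ¬ (g = false ∧ m + k = 0) := by
              rintro ⟨rfl, hh⟩; exact h1 ⟨rfl, by omega⟩
            have h3 : ¬ (g = false ∧ m + k + 1 = 0) := by
              rintro ⟨rfl, hh⟩; omega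
            simp [h1, apply_ite, h2, h3]
            intro _ hg hm'
            exact absurd ⟨hg, hm'⟩ h1
        | W f n =>
          rcases Nat.mod_two_eq_zero_or_one n with hn | hn <;>
          rcases Nat.mod_two_eq_zero_or_one m with hm | hm <;>
          cases f <;> cases g <;> cases h <;>
          · simp only [W_mul_W, parity2, parity1, hn, hm]
            norm_num
            split_ifs <;> simp only [S.W.injEq, true_and] <;> omega

end S

/-- The map sending each generator of `B4` to its image in the model `S`. -/
def genS : B4 → S
  | B4.a => S.W false 0
  | B4.b => S.W true 0
  | B4.x => S.X
  | B4.y => S.Y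

instance (e f : B4) : Decidable (basicPair e f) := by
  unfold basicPair; infer_instance

lemma genS_basic : ∀ e f : B4, basicPair e f → genS e * genS f = genS (e * f) := by
  decide

def phiF : FreeSemigroup B4 →ₙ* S := FreeSemigroup.lift genS

lemma phi_resp : ∀ u v, igCon B4 u v → phiF u = phiF v := by
  intro u v h
  induction h with
  | of u v h =>
    obtain ⟨e, f, hb, rfl, rfl⟩ := h
    simp only [map_mul, phiF, FreeSemigroup.lift_of]
    exact genS_basic e f hb
  | refl => rfl
  | symm _ ih => exact ih.symm
  | trans _ _ ih1 ih2 => exact ih1.trans ih2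
  | mul _ _ ih1 ih2 => simp only [map_mul, ih1, ih2]

def piF : IG B4 → S := Quotient.lift phiF phi_resp

lemma pi_mk (u : FreeSemigroup B4) : piF (u : (igCon B4).Quotient) = phiF u := rfl

lemma pi_of (e : B4) : piF (igOf e) = genS e := rfl

lemma pi_mul (g h : IG B4) : piF (g * h) = piF g * piF h := by
  refine Con.induction_on₂ g h fun u v => ?_
  rw [← Con.coe_mul, pi_mk, pi_mk, pi_mk, map_mul]

/-- equality in `IG` from basic pairs -/
lemma ig_basic (e f : B4) (h : basicPair e f) : igOf e * igOf f = igOf (e * f) :=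
  (Con.coe_mul _ _).symm.trans ((Con.eq _).2 (ConGen.Rel.of _ _ ⟨e, f, h, rfl, rfl⟩))

def gen : Bool → B4
  | false => B4.a
  | true => B4.b

def psiW : Bool → ℕ → IG B4
  | f, 0 => igOf (gen f)
  | f, n + 1 => igOf (gen f) * psiW (!f) n

def psiF : S → IG B4
  | S.W f n => psiW f n
  | S.X => igOf B4.x
  | S.Y => igOf B4.y

lemma y_absorb : ∀ (m : ℕ) (g : Bool), igOf B4.y * psiW g m = igOf B4.y := by
  intro m
  induction m with
  | zero =>
    intro g
    cases g
    · exact ig_basic B4.y B4.a (by decide)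
    · exact ig_basic B4.y B4.b (by decide)
  | succ m ih =>
    intro g
    cases g
    · rw [psiW, ← mul_assoc, ig_basic B4.y (gen false) (by decide)]
      exact ih _
    · rw [psiW, ← mul_assoc, ig_basic B4.y (gen true) (by decide)]
      exact ih _

lemma x_true : ∀ m : ℕ, igOf B4.x * psiW true m = igOf B4.y := by
  intro m
  cases m with
  | zero => exact ig_basic B4.x B4.b (by decide)
  | succ m =>
    rw [psiW, ← mul_assoc, ig_basic B4.x (gen true) (by decide)]
    exact y_absorb m _

lemma x_false_succ (m : ℕ) : igOf B4.x * psiW false (m + 1) = igOf B4.y := by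
  rw [psiW, ← mul_assoc, ig_basic B4.x (gen false) (by decide)]
  exact x_true m

lemma a_absorb : ∀ m : ℕ, igOf B4.a * psiW false m = psiW false m := by
  intro m
  cases m with
  | zero => exact ig_basic B4.a B4.a (by decide)
  | succ m =>
    rw [psiW, ← mul_assoc, ig_basic B4.a (gen false) (by decide)]
    rfl

lemma b_absorb : ∀ m : ℕ, igOf B4.b * psiW true m = psiW true m := by
  intro m
  cases m with
  | zero => exact ig_basic B4.b B4.b (by decide)
  | succ m =>
    rw [psiW, ← mul_assoc, ig_basic B4.b (gen true) (by decide)]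
    rfl

lemma psi_genS_mul (e : B4) (s : S) : psiF (genS e * s) = igOf e * psiF s := by
  cases e <;> cases s
  case a.W g m =>
    cases g
    · show psiF (if (xor false ((0:ℕ) % 2 == 1)) = false then S.W false (0 + m) else S.W false (0 + m + 1)) =
        igOf B4.a * psiW false m
      rw [if_pos (by norm_num), a_absorb]
      show psiW false (0 + m) = psiW false m
      rw [Nat.zero_add]
    · show psiF (if (xor false ((0:ℕ) % 2 == 1)) = true then S.W false (0 + m) else S.W false (0 + m + 1)) =
        igOf B4.a * psiW true m
      rw [if_neg (by norm_num)]
      show psiW false (0 + m + 1) = _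
      rw [Nat.zero_add]
      rfl
  case b.W g m =>
    cases g
    · show psiF (if (xor true ((0:ℕ) % 2 == 1)) = false then S.W true (0 + m) else S.W true (0 + m + 1)) =
        igOf B4.b * psiW false m
      rw [if_neg (by norm_num)]
      show psiW true (0 + m + 1) = _
      rw [Nat.zero_add]
      rfl
    · show psiF (if (xor true ((0:ℕ) % 2 == 1)) = true then S.W true (0 + m) else S.W true (0 + m + 1)) =
        igOf B4.b * psiW true m
      rw [if_pos (by norm_num), b_absorb]
      show psiW true (0 + m) = psiW true m
      rw [Nat.zero_add]
  case x.W g m =>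
    show psiF (if g = false ∧ m = 0 then S.X else S.Y) = igOf B4.x * psiW g m
    cases g
    · cases m with
      | zero => rw [if_pos ⟨rfl, rfl⟩]; exact (ig_basic B4.x B4.a (by decide)).symm
      | succ m => rw [if_neg (by simp)]; exact (x_false_succ m).symm
    · rw [if_neg (by simp)]; exact (x_true m).symm
  case y.W g m => exact (y_absorb m g).symm
  case a.X => exact (ig_basic B4.a B4.x (by decide)).symm
  case a.Y => exact (ig_basic B4.a B4.y (by decide)).symm
  case b.X => exact (ig_basic B4.b B4.x (by decide)).symm
  case b.Y => exact (ig_basic B4.b B4.y (by decide)).symm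
  case x.X => exact (ig_basic B4.x B4.x (by decide)).symm
  case x.Y => exact (ig_basic B4.x B4.y (by decide)).symm
  case y.X => exact (ig_basic B4.y B4.x (by decide)).symm
  case y.Y => exact (ig_basic B4.y B4.y (by decide)).symm

lemma psi_pi (g : IG B4) : psiF (piF g) = g := by
  refine Con.induction_on g fun u => ?_
  induction u using FreeSemigroup.recOnMul with
  | ih1 e => cases e <;> rfl
  | ih2 p q ih1 ih2 =>
    rw [Con.coe_mul, pi_mul]
    show psiF (genS p * piF ↑q) = _
    rw [psi_genS_mul, ih2]
    rfl

lemma S_idem (s : S) (h : s * s = s) :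
    s = S.W false 0 ∨ s = S.W true 0 ∨ s = S.X ∨ s = S.Y := by
  cases s with
  | X => right; right; left; rfl
  | Y => right; right; right; rfl
  | W f n =>
    rw [S.W_mul_W] at h
    split_ifs at h <;> rw [S.W.injEq] at h <;>
    · have : n = 0 := by omega
      subst this
      cases f
      · exact Or.inl rfl
      · exact Or.inr (Or.inl rfl)

/-- key computations in IG -/
lemma key_xab : igOf B4.x * (igOf B4.a * igOf B4.b) = igOf B4.y := by
  rw [← mul_assoc, ig_basic B4.x B4.a (by decide)]
  exact ig_basic _ _ (by decide)

lemma key_yab : igOf B4.y * (igOf B4.a * igOf B4.b) = igOf B4.y := by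
  rw [← mul_assoc, ig_basic B4.y B4.a (by decide)]
  exact ig_basic _ _ (by decide)

lemma key_aab : igOf B4.a * (igOf B4.a * igOf B4.b) = igOf B4.a * igOf B4.b := by
  rw [← mul_assoc, ig_basic B4.a B4.a (by decide)]
  rfl

theorem key : ¬ ∃ w : IG B4, IsIdempotentElem w ∧ RStar (igOf B4.a * igOf B4.b) w := by
  rintro ⟨w, hw, hr⟩
  have hsec : psiF (piF w) = w := psi_pi w
  have hidem : piF w * piF w = piF w := by rw [← pi_mul, hw]
  have pi_ab : piF (igOf B4.a * igOf B4.b) = S.W false 1 := by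
    rw [pi_mul, pi_of, pi_of]; rfl
  rcases S_idem _ hidem with h | h | h | h <;> rw [h] at hsec
  · -- w = igOf a
    obtain rfl : w = igOf B4.a := hsec.symm
    have h1 : (↑(igOf B4.x) : WithOne (IG B4)) * ↑(igOf B4.a * igOf B4.b) =
        (↑(igOf B4.y) : WithOne (IG B4)) * ↑(igOf B4.a * igOf B4.b) := by
      rw [← WithOne.coe_mul, ← WithOne.coe_mul, key_xab, key_yab]
    have h2 := (hr _ _).1 h1
    rw [← WithOne.coe_mul, ← WithOne.coe_mul, ig_basic B4.x B4.a (by decide),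
      ig_basic B4.y B4.a (by decide)] at h2
    have h4 := congrArg piF (WithOne.coe_inj.1 h2)
    rw [pi_of, pi_of] at h4
    exact absurd h4 (by decide)
  · -- w = igOf b
    obtain rfl : w = igOf B4.b := hsec.symm
    have h1 : (1 : WithOne (IG B4)) * ↑(igOf B4.a * igOf B4.b) =
        (↑(igOf B4.a) : WithOne (IG B4)) * ↑(igOf B4.a * igOf B4.b) := by
      rw [one_mul, ← WithOne.coe_mul, key_aab]
    have h2 := (hr _ _).1 h1
    rw [one_mul, ← WithOne.coe_mul] at h2
    have h4 := congrArg piF (WithOne.coe_inj.1 h2)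
    rw [pi_mul, pi_of, pi_of] at h4
    exact absurd h4 (by decide)
  · -- w = igOf x
    obtain rfl : w = igOf B4.x := hsec.symm
    have h1 : (1 : WithOne (IG B4)) * ↑(igOf B4.x) =
        (↑(igOf B4.b) : WithOne (IG B4)) * ↑(igOf B4.x) := by
      rw [one_mul, ← WithOne.coe_mul, ig_basic B4.b B4.x (by decide)]
      rfl
    have h2 := (hr _ _).2 h1
    rw [one_mul, ← WithOne.coe_mul] at h2
    have h4 := congrArg piF (WithOne.coe_inj.1 h2)
    rw [pi_ab, pi_mul, pi_of, pi_ab] at h4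
    exact absurd h4 (by decide)
  · -- w = igOf y
    obtain rfl : w = igOf B4.y := hsec.symm
    have h1 : (1 : WithOne (IG B4)) * ↑(igOf B4.y) =
        (↑(igOf B4.b) : WithOne (IG B4)) * ↑(igOf B4.y) := by
      rw [one_mul, ← WithOne.coe_mul, ig_basic B4.b B4.y (by decide)]
      rfl
    have h2 := (hr _ _).2 h1
    rw [one_mul, ← WithOne.coe_mul] at h2
    have h4 := congrArg piF (WithOne.coe_inj.1 h2)
    rw [pi_ab, pi_mul, pi_of, pi_ab] at h4
    exact absurd h4 (by decide)

end IGB4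

/-- `B4` is a band, and in `IG B4` the element `ā b̄` is not
`𝓡*`-related to any idempotent; in particular `IG B4` is not abundant. -/
theorem IG_B4_not_abundant :
    (∀ p : B4, p * p = p) ∧
    (¬ ∃ w : IG B4, IsIdempotentElem w ∧ RStar (igOf B4.a * igOf B4.b) w) ∧
    ¬ Abundant (IG B4) := by
  refine ⟨by decide, IGB4.key, fun hab => IGB4.key ?_⟩
  obtain ⟨⟨e, he, hre⟩, -⟩ := hab (igOf B4.a * igOf B4.b)
  exact ⟨e, he, hre⟩
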